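/- Lower bound for escape time: if along a trajectory of dx/dt = -∇f/|∇f| - ζ∇g/|∇g| one has A ≤ |∇f(x(t))| and f(x(t)) ∈ [-B, B] for all t up to the first boundary-hitting time T♯, then T♯ ≤ 2B/(A(1-ζ)). -/

import Mathlib

open scoped RealInnerProductSpace

/-- Lower bound for escape time: if along a trajectory of
`dx/dt = -∇f/‖∇f‖ - ζ ∇g/‖∇g‖` one has `A ≤ ‖∇f(x(t))‖` and `|f(x(t))| ≤ B`
for all `t` up to the first boundary-hitting time `T♯`, then
`T♯ ≤ 2B/(A(1-ζ))`. -/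
theorem escape_time_bound {n : ℕ}
    (f g : EuclideanSpace ℝ (Fin n) → ℝ)
    (F G : EuclideanSpace ℝ (Fin n) → EuclideanSpace ℝ (Fin n))
    (hf : ∀ y, HasGradientAt f (F y) y) (hg : ∀ y, HasGradientAt g (G y) y)
    (ζ : ℝ) (hζ : ζ ∈ Set.Ico (0 : ℝ) 1)
    (Tsharp : ℝ) (hTs : 0 ≤ Tsharp) (x : ℝ → EuclideanSpace ℝ (Fin n))
    (hF : ∀ t ∈ Set.Icc 0 Tsharp, F (x t) ≠ 0)
    (hG : ∀ t ∈ Set.Icc 0 Tsharp, G (x t) ≠ 0)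
    (hx : ∀ t ∈ Set.Icc 0 Tsharp, HasDerivAt x
      (-(‖F (x t)‖⁻¹ • F (x t)) - ζ • (‖G (x t)‖⁻¹ • G (x t))) t)
    (A B : ℝ) (hA : 0 < A) (hB : 0 < B)
    (hAF : ∀ t ∈ Set.Icc 0 Tsharp, A ≤ ‖F (x t)‖)
    (hfB : ∀ t ∈ Set.Icc 0 Tsharp, |f (x t)| ≤ B) :
    Tsharp ≤ 2 * B / (A * (1 - ζ)) := by
  obtain ⟨hζ0, hζ1⟩ := hζ
  set c : ℝ := A * (1 - ζ) with hc
  have hcpos : 0 < c := mul_pos hA (by linarith)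
  -- derivative of φ(t) = f(x t) + c * t
  set φ : ℝ → ℝ := fun t => f (x t) + c * t with hφdef
  have hφ : ∀ t ∈ Set.Icc 0 Tsharp, ∃ d ≤ 0, HasDerivAt φ d t := by
    intro t ht
    set Ft := F (x t)
    set Gt := G (x t)
    have hFt : Ft ≠ 0 := hF t ht
    have hGt : Gt ≠ 0 := hG t ht
    have hd : HasDerivAt (fun s => f (x s))
        (⟪Ft, -(‖Ft‖⁻¹ • Ft) - ζ • (‖Gt‖⁻¹ • Gt)⟫) t := by
      have h1 := ((hf (x t)).hasFDerivAt.comp_hasDerivAt t (hx t ht))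
      simp [InnerProductSpace.toDual_apply_apply] at h1
      exact h1
    have hφd : HasDerivAt φ (⟪Ft, -(‖Ft‖⁻¹ • Ft) - ζ • (‖Gt‖⁻¹ • Gt)⟫ + c) t := by
      exact (hd.add ((hasDerivAt_id t).const_mul c)).congr_deriv (by simp)
    refine ⟨_, ?_, hφd⟩
    have e1 : ⟪Ft, -(‖Ft‖⁻¹ • Ft) - ζ • (‖Gt‖⁻¹ • Gt)⟫
        = -(‖Ft‖⁻¹ * ⟪Ft, Ft⟫) - ζ * (‖Gt‖⁻¹ * ⟪Ft, Gt⟫) := by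
      rw [inner_sub_right, inner_neg_right, inner_smul_right, inner_smul_right,
        inner_smul_right]
    have e2 : ‖Ft‖⁻¹ * ⟪Ft, Ft⟫ = ‖Ft‖ := by
      rw [real_inner_self_eq_norm_sq]
      field_simp [norm_ne_zero_iff.mpr hFt]
    have hGpos : (0:ℝ) < ‖Gt‖ := norm_pos_iff.mpr hGt
    have hCS : -(‖Ft‖ * ‖Gt‖) ≤ ⟪Ft, Gt⟫ := by
      have h := abs_le.mp (abs_real_inner_le_norm Ft Gt)
      linarith [h.1]
    have h4 : -‖Ft‖ ≤ ‖Gt‖⁻¹ * ⟪Ft, Gt⟫ := by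
      have h5 := mul_le_mul_of_nonneg_left hCS (inv_nonneg.mpr hGpos.le)
      have h6 : ‖Gt‖⁻¹ * -(‖Ft‖ * ‖Gt‖) = -‖Ft‖ := by field_simp
      linarith
    have hAFt := hAF t ht
    rw [e1, e2, hc]
    nlinarith [mul_le_mul_of_nonneg_left h4 hζ0]
  -- φ is antitone on Icc 0 Tsharp
  have hcont : ContinuousOn φ (Set.Icc 0 Tsharp) := by
    intro t ht
    obtain ⟨d, _, hd⟩ := hφ t ht
    exact (hd.continuousAt).continuousWithinAt
  have hanti : AntitoneOn φ (Set.Icc 0 Tsharp) := by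
    apply antitoneOn_of_deriv_nonpos (convex_Icc 0 Tsharp) hcont
    · intro t ht
      rw [interior_Icc] at ht
      obtain ⟨d, _, hd⟩ := hφ t (Set.mem_Icc_of_Ioo ht)
      exact hd.differentiableAt.differentiableWithinAt
    · intro t ht
      rw [interior_Icc] at ht
      obtain ⟨d, hd0, hd⟩ := hφ t (Set.mem_Icc_of_Ioo ht)
      rw [hd.deriv]
      exact hd0
  have key := hanti (Set.left_mem_Icc.mpr hTs) (Set.right_mem_Icc.mpr hTs) hTs
  simp only [hφdef, mul_zero, add_zero] at key
  have h0 := abs_le.mp (hfB 0 (Set.left_mem_Icc.mpr hTs))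
  have hT := abs_le.mp (hfB Tsharp (Set.right_mem_Icc.mpr hTs))
  rw [le_div_iff₀ hcpos]
  calc Tsharp * (A * (1 - ζ)) = c * Tsharp := by rw [hc]; ring
    _ ≤ f (x 0) - f (x Tsharp) := by linarith
    _ ≤ 2 * B := by linarith [h0.2, hT.1]
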